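/- A string rewriting system is locally confluent if and only if all of its critical branchings are confluent (the critical pair lemma for string rewriting). -/

import Mathlib

/-- A rewriting step of a string rewriting system `R` over the alphabet `A`:
a rule `(l, r) ∈ R` applied in the context `p — s`, rewriting the word
`p ++ l ++ s` into `p ++ r ++ s`. -/
structure RewStep {A : Type*} (R : Set (List A × List A)) where
  p : List A
  l : List A
  r : List A
  s : List A
  mem : (l, r) ∈ R

namespace RewStep

variable {A : Type*} {R : Set (List A × List A)}

/-- The source of a rewriting step. -/
def src (f : RewStep R) : List A := f.p ++ f.l ++ f.s

/-- The target of a rewriting step. -/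
def tgt (f : RewStep R) : List A := f.p ++ f.r ++ f.s

/-- Whiskering a rewriting step by a context `u — v`. -/
def ctx (u : List A) (f : RewStep R) (v : List A) : RewStep R :=
  ⟨u ++ f.p, f.l, f.r, f.s ++ v, f.mem⟩

end RewStep

/-- The one-step rewriting relation of a string rewriting system. -/
def StringStep {A : Type*} (R : Set (List A × List A)) (u v : List A) : Prop :=
  ∃ f : RewStep R, f.src = u ∧ f.tgt = v

/-- Two words are joinable if they have a common reduct. -/
def Joinable {A : Type*} (R : Set (List A × List A)) (u v : List A) : Prop :=
  ∃ w : List A, Relation.ReflTransGen (StringStep R) u w ∧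
    Relation.ReflTransGen (StringStep R) v w

/-- A Peiffer branching: the two rewriting steps apply to non-overlapping
factors of the common source. -/
def IsPeiffer {A : Type*} {R : Set (List A × List A)} (f g : RewStep R) : Prop :=
  f.p.length + f.l.length ≤ g.p.length ∨ g.p.length + g.l.length ≤ f.p.length

/-- A critical branching: an overlapping local branching (neither aspherical
nor Peiffer) that is minimal, i.e. not obtained from a smaller local branching
by whiskering with a context. -/
def IsCritical {A : Type*} {R : Set (List A × List A)} (f g : RewStep R) : Prop :=
  f.src = g.src ∧ f ≠ g ∧ ¬ IsPeiffer f g ∧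
    ∀ (u v : List A) (f' g' : RewStep R),
      f = f'.ctx u v → g = g'.ctx u v → u = [] ∧ v = []

section Helpers

variable {A : Type*} {R : Set (List A × List A)}

lemma stringStep_ctx (u v : List A) {a b : List A} (h : StringStep R a b) :
    StringStep R (u ++ a ++ v) (u ++ b ++ v) := by
  obtain ⟨f, h1, h2⟩ := h
  exact ⟨f.ctx u v, by simp [RewStep.src, RewStep.ctx, ← h1, List.append_assoc],
         by simp [RewStep.tgt, RewStep.ctx, ← h2, List.append_assoc]⟩

lemma joinable_ctx (u v : List A) {a b : List A} (h : Joinable R a b) :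
    Joinable R (u ++ a ++ v) (u ++ b ++ v) := by
  obtain ⟨w, h1, h2⟩ := h
  exact ⟨u ++ w ++ v,
    Relation.ReflTransGen.lift (fun x => u ++ x ++ v) (fun x y => stringStep_ctx u v) _ _ h1,
    Relation.ReflTransGen.lift (fun x => u ++ x ++ v) (fun x y => stringStep_ctx u v) _ _ h2⟩

lemma joinable_symm {a b : List A} (h : Joinable R a b) : Joinable R b a := by
  obtain ⟨w, h1, h2⟩ := h; exact ⟨w, h2, h1⟩

lemma peiffer_join_le (f g : RewStep R) (hsrc : f.src = g.src)
    (h : f.p.length + f.l.length ≤ g.p.length) :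
    Joinable R f.tgt g.tgt := by
  have h1 : (f.p ++ f.l) <+: g.p := by
    apply List.prefix_of_prefix_length_le
    · exact ⟨f.s, by simpa [RewStep.src, List.append_assoc] using hsrc⟩
    · exact ⟨g.l ++ g.s, by simp [RewStep.src]⟩
    · simpa using h
  obtain ⟨m, hm⟩ := h1
  have hfs : f.s = m ++ (g.l ++ g.s) := by
    have h2 := hsrc
    rw [RewStep.src, RewStep.src, ← hm] at h2
    simp only [List.append_assoc] at h2
    exact List.append_cancel_left (List.append_cancel_left h2)
  refine ⟨f.p ++ f.r ++ m ++ g.r ++ g.s, ?_, ?_⟩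
  · exact Relation.ReflTransGen.single
      ⟨⟨f.p ++ f.r ++ m, g.l, g.r, g.s, g.mem⟩,
        by simp [RewStep.src, RewStep.tgt, hfs, List.append_assoc],
        by simp [RewStep.tgt, List.append_assoc]⟩
  · exact Relation.ReflTransGen.single
      ⟨⟨f.p, f.l, f.r, m ++ g.r ++ g.s, f.mem⟩,
        by simp [RewStep.src, RewStep.tgt, ← hm, List.append_assoc],
        by simp [RewStep.tgt, List.append_assoc]⟩

lemma RewStep.ext' (f g : RewStep R) (h1 : f.p = g.p) (h2 : f.l = g.l)
    (h3 : f.r = g.r) (h4 : f.s = g.s) : f = g := by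
  cases f; cases g; simp_all

lemma overlap_join
    (H : ∀ f g : RewStep R, IsCritical f g → Joinable R f.tgt g.tgt)
    (f g : RewStep R) (u pf pg sf sg v : List A)
    (hfp : f.p = u ++ pf) (hgp : g.p = u ++ pg)
    (hfs : f.s = sf ++ v) (hgs : g.s = sg ++ v)
    (hpmin : pf = [] ∨ pg = []) (hsmin : sf = [] ∨ sg = [])
    (hsrc : f.src = g.src) (hne : f ≠ g) (hnp : ¬ IsPeiffer f g) :
    Joinable R f.tgt g.tgt := by
  set f' : RewStep R := ⟨pf, f.l, f.r, sf, f.mem⟩ with hf'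
  set g' : RewStep R := ⟨pg, g.l, g.r, sg, g.mem⟩ with hg'
  have hfctx : f = f'.ctx u v := by
    apply RewStep.ext' <;> simp [RewStep.ctx, hf', hfp, hfs]
  have hgctx : g = g'.ctx u v := by
    apply RewStep.ext' <;> simp [RewStep.ctx, hg', hgp, hgs]
  have hsrc' : f'.src = g'.src := by
    have h2 := hsrc
    rw [RewStep.src, RewStep.src, hfp, hgp, hfs, hgs] at h2
    simp only [List.append_assoc] at h2
    have h3 := List.append_cancel_left h2
    rw [RewStep.src, RewStep.src]
    simp only [List.append_assoc]
    have h4 : (pf ++ f.l ++ sf) ++ v = (pg ++ g.l ++ sg) ++ v := by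
      simpa [List.append_assoc] using h3
    simpa [List.append_assoc] using List.append_cancel_right h4
  have hcrit : IsCritical f' g' := by
    refine ⟨hsrc', ?_, ?_, ?_⟩
    · intro h; exact hne (by rw [hfctx, hgctx, h])
    · intro hP
      apply hnp
      rcases hP with h | h
      · left
        simp only [hf', hg'] at h
        rw [hfp, hgp]
        simp only [List.length_append]
        omega
      · right
        simp only [hf', hg'] at h
        rw [hfp, hgp]
        simp only [List.length_append]
        omega
    · intro u' v' f'' g'' hf'' hg''
      have h1 : pf = u' ++ f''.p := congrArg RewStep.p hf''
      have h2 : pg = u' ++ g''.p := congrArg RewStep.p hg''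
      have h3 : sf = f''.s ++ v' := congrArg RewStep.s hf''
      have h4 : sg = g''.s ++ v' := congrArg RewStep.s hg''
      constructor
      · rcases hpmin with h | h
        · rw [h] at h1; exact (List.append_eq_nil_iff.mp h1.symm).1
        · rw [h] at h2; exact (List.append_eq_nil_iff.mp h2.symm).1
      · rcases hsmin with h | h
        · rw [h] at h3; exact (List.append_eq_nil_iff.mp h3.symm).2
        · rw [h] at h4; exact (List.append_eq_nil_iff.mp h4.symm).2
  have hj := H f' g' hcrit
  have := joinable_ctx u v hj
  have hft : f.tgt = u ++ f'.tgt ++ v := by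
    rw [RewStep.tgt, RewStep.tgt, hfp, hfs]; simp [List.append_assoc]; rfl
  have hgt : g.tgt = u ++ g'.tgt ++ v := by
    rw [RewStep.tgt, RewStep.tgt, hgp, hgs]; simp [List.append_assoc]; rfl
  rw [hft, hgt]; exact this

end Helpers

/-- Critical pair lemma for string rewriting: a string rewriting system is
locally confluent if and only if all of its critical branchings are
confluent. -/
theorem locally_confluent_iff_critical_confluent {A : Type*}
    (R : Set (List A × List A)) :
    (∀ a b c : List A, StringStep R a b → StringStep R a c → Joinable R b c) ↔
    (∀ f g : RewStep R, IsCritical f g → Joinable R f.tgt g.tgt) := by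
  constructor
  · intro H f g hc
    exact H f.src f.tgt g.tgt ⟨f, rfl, rfl⟩ ⟨g, hc.1.symm, rfl⟩
  · intro H a b c hab hac
    obtain ⟨f, hf1, hf2⟩ := hab
    obtain ⟨g, hg1, hg2⟩ := hac
    subst hf2; subst hg2
    have hsrc : f.src = g.src := hf1.trans hg1.symm
    by_cases hfg : f = g
    · subst hfg; exact ⟨f.tgt, .refl, .refl⟩
    by_cases hp : IsPeiffer f g
    · rcases hp with h | h
      · exact peiffer_join_le f g hsrc h
      · exact joinable_symm (peiffer_join_le g f hsrc.symm h)
    · have hpf : f.p <+: f.src := ⟨f.l ++ f.s, by simp [RewStep.src]⟩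
      have hpg : g.p <+: f.src := by
        rw [hsrc]; exact ⟨g.l ++ g.s, by simp [RewStep.src]⟩
      have hsf : f.s <:+ f.src := ⟨f.p ++ f.l, by simp [RewStep.src]⟩
      have hsg : g.s <:+ f.src := by
        rw [hsrc]; exact ⟨g.p ++ g.l, by simp [RewStep.src]⟩
      rcases le_total f.p.length g.p.length with hle | hle
      · obtain ⟨pg, hgp⟩ := List.prefix_of_prefix_length_le hpf hpg hle
        rcases le_total f.s.length g.s.length with hle2 | hle2
        · obtain ⟨sg, hgs⟩ := List.suffix_of_suffix_length_le hsf hsg hle2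
          exact overlap_join H f g f.p [] pg [] sg f.s (by simp) hgp.symm
            (by simp) hgs.symm (Or.inl rfl) (Or.inl rfl) hsrc hfg hp
        · obtain ⟨sf, hfs⟩ := List.suffix_of_suffix_length_le hsg hsf hle2
          exact overlap_join H f g f.p [] pg sf [] g.s (by simp) hgp.symm
            hfs.symm (by simp) (Or.inl rfl) (Or.inr rfl) hsrc hfg hp
      · obtain ⟨pf, hfp⟩ := List.prefix_of_prefix_length_le hpg hpf hle
        rcases le_total f.s.length g.s.length with hle2 | hle2
        · obtain ⟨sg, hgs⟩ := List.suffix_of_suffix_length_le hsf hsg hle2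
          exact overlap_join H f g g.p pf [] [] sg f.s hfp.symm (by simp)
            (by simp) hgs.symm (Or.inr rfl) (Or.inl rfl) hsrc hfg hp
        · obtain ⟨sf, hfs⟩ := List.suffix_of_suffix_length_le hsg hsf hle2
          exact overlap_join H f g g.p pf [] sf [] g.s hfp.symm (by simp)
            hfs.symm (by simp) (Or.inr rfl) (Or.inr rfl) hsrc hfg hp
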